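/- Let R be an associative unital C-algebra with no zero divisors, equipped with an exhaustive increasing algebra filtration (R_m)_{m in N} (so each R_m is a C-subspace, R_m ⊆ R_{m+1}, 1 ∈ R_0, R_i · R_j ⊆ R_{i+j}, and ∪_m R_m = R). Let Gr R = ⊕_{m≥0} R_m/R_{m−1} (with R_{−1} = 0) be the associated graded algebra, with multiplication induced by that of R. Suppose z_1, …, z_n are central elements of R such that their principal symbols z̄_1, …, z̄_n (the image of z_i in R_{d_i}/R_{d_i−1}, where d_i is minimal with z_i ∈ R_{d_i}) generate the center of Gr R as a C-algebra. Then z_1, …, z_n generate the center Z(R) of R as a C-algebra. (Lemma le:degc of the paper.) -/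

import Mathlib

/-- `filPrev F m` is the filtration piece `F (m-1)`, with the convention `F (-1) = ⊥`. -/
def filPrev {R : Type*} [AddCommMonoid R] [Module ℂ R]
    (F : ℕ → Submodule ℂ R) : ℕ → Submodule ℂ R
  | 0 => ⊥
  | (m + 1) => F m

/-- Lemma 6.9 (le:degc) of the paper.  Let `R` be an associative unital `ℂ`-algebra with
no zero divisors, equipped with an exhaustive increasing algebra filtration `F`.  Let
`z 1, …, z n` be central elements of `R`, of filtration degrees `d i` (so `z i ∈ F (d i)`
and `z i ∉ F (d i - 1)`).  Suppose that the principal symbols of the `z i` generate the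
center of the associated graded algebra `Gr R` as a `ℂ`-algebra; concretely, every
homogeneous central element of `Gr R` — i.e. every `f ∈ F m` whose commutator with any
`g ∈ F k` lies in `F (m+k-1)` — agrees modulo `F (m-1)` with a `ℂ`-linear combination of
monomials `∏ i, z i ^ a i` of total symbol degree `∑ i, a i * d i = m`.  Then
`z 1, …, z n` generate the center `Z(R)` of `R` as a `ℂ`-algebra. -/
theorem center_generated_of_graded_center_generated
    {R : Type*} [Ring R] [Algebra ℂ R] [NoZeroDivisors R]
    (F : ℕ → Submodule ℂ R)
    (hmono : Monotone F)
    (hone : (1 : R) ∈ F 0)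
    (hmul : ∀ i j : ℕ, ∀ x ∈ F i, ∀ y ∈ F j, x * y ∈ F (i + j))
    (hexh : ∀ r : R, ∃ m, r ∈ F m)
    (n : ℕ) (z : Fin n → R) (d : Fin n → ℕ)
    (hz_central : ∀ i, ∀ r : R, z i * r = r * z i)
    (hz_deg : ∀ i, z i ∈ F (d i))
    (hz_min : ∀ i, z i ∉ filPrev F (d i))
    (hgen : ∀ m : ℕ, ∀ f ∈ F m,
      (∀ k : ℕ, ∀ g ∈ F k, f * g - g * f ∈ filPrev F (m + k)) →
      ∃ (s : Finset (Fin n → ℕ)) (c : (Fin n → ℕ) → ℂ),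
        (∀ a ∈ s, ∑ i, a i * d i = m) ∧
        f - ∑ a ∈ s, c a • (List.ofFn fun i => z i ^ a i).prod ∈ filPrev F m) :
    Subalgebra.center ℂ R = Algebra.adjoin ℂ (Set.range z) := by

  have hzc : ∀ i, z i ∈ Subalgebra.center ℂ R := fun i =>
    Subalgebra.mem_center_iff.mpr fun b => (hz_central i b).symm
  have hPc : ∀ (a : Fin n → ℕ), (List.ofFn fun i => z i ^ a i).prod ∈ Subalgebra.center ℂ R := by
    intro a
    refine list_prod_mem ?_
    intro x hx
    obtain ⟨i, rfl⟩ := List.mem_ofFn.mp hx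
    exact pow_mem (hzc i) _
  have hPa : ∀ (a : Fin n → ℕ),
      (List.ofFn fun i => z i ^ a i).prod ∈ Algebra.adjoin ℂ (Set.range z) := by
    intro a
    refine list_prod_mem ?_
    intro x hx
    obtain ⟨i, rfl⟩ := List.mem_ofFn.mp hx
    exact pow_mem (Algebra.subset_adjoin (Set.mem_range_self i)) _
  apply le_antisymm
  · intro f hf
    obtain ⟨m, hm⟩ := hexh f
    induction m generalizing f with
    | zero =>
      obtain ⟨s, c, _, hrest⟩ := hgen 0 f hm (fun k g _ => by
        simp [(Subalgebra.mem_center_iff.mp hf g).symm, sub_self, Submodule.zero_mem])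
      have : f = ∑ a ∈ s, c a • (List.ofFn fun i => z i ^ a i).prod :=
        sub_eq_zero.mp ((Submodule.mem_bot ℂ).mp hrest)
      rw [this]
      exact Subalgebra.sum_mem _ fun a _ => Subalgebra.smul_mem _ (hPa a) _
    | succ m ih =>
      obtain ⟨s, c, _, hrest⟩ := hgen (m+1) f hm (fun k g _ => by
        simp [(Subalgebra.mem_center_iff.mp hf g).symm, sub_self, Submodule.zero_mem])
      set S := ∑ a ∈ s, c a • (List.ofFn fun i => z i ^ a i).prod with hS
      have hSa : S ∈ Algebra.adjoin ℂ (Set.range z) :=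
        Subalgebra.sum_mem _ fun a _ => Subalgebra.smul_mem _ (hPa a) _
      have hSc : S ∈ Subalgebra.center ℂ R :=
        Subalgebra.sum_mem _ fun a _ => Subalgebra.smul_mem _ (hPc a) _
      have h1 : f - S ∈ Subalgebra.center ℂ R := sub_mem hf hSc
      have h2 : f - S ∈ Algebra.adjoin ℂ (Set.range z) := ih h1 hrest
      have : f = (f - S) + S := by abel
      rw [this]; exact add_mem h2 hSa
  · rw [Algebra.adjoin_le_iff]
    rintro x ⟨i, rfl⟩
    exact hzc i
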